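/- Let q > 2 be a prime power and A = 𝔽_q[T]. Suppose ℘ ∈ A and P = ℘ + 1 are both monic irreducible polynomials of degree n ≥ 2. Then P divides C_℘(1), and C_℘(1) is not irreducible in A. -/

import Mathlib

open Polynomial

/-- Compositional iterates of the Carlitz polynomial `C_T(x) = T·x + x^q`, so that
`carlitzTpow F n = C_{T^n}(x) ∈ (𝔽_q[T])[x]` (here `q = Fintype.card F`). -/
noncomputable def carlitzTpow (F : Type) [Field F] [Fintype F] : ℕ → Polynomial (Polynomial F)
  | 0 => X
  | n + 1 => (carlitzTpow F n).comp (Polynomial.C Polynomial.X * X + X ^ (Fintype.card F))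

/-- The Carlitz module polynomial `C_m(x) ∈ (𝔽_q[T])[x]` for `m ∈ A = 𝔽_q[T]`:
it is determined by `𝔽_q`-linearity in `m` together with
`C_{T^n}(x) = C_T(C_T(⋯ C_T(x)⋯))` (`n`-fold composition of `C_T(x) = T·x + x^q`). -/
noncomputable def carlitz (F : Type) [Field F] [Fintype F] (m : Polynomial F) :
    Polynomial (Polynomial F) :=
  m.sum fun i c => Polynomial.C (Polynomial.C c) * carlitzTpow F i

/-- Evaluation `C_m(α) ∈ 𝔽_q[T]` of the Carlitz polynomial `C_m(x)` at `α ∈ 𝔽_q[T]`. -/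
noncomputable def carlitzEval (F : Type) [Field F] [Fintype F] (m α : Polynomial F) :
    Polynomial F :=
  (carlitz F m).eval α

open Finset

section CarlitzAux

variable (F : Type) [Field F] [Fintype F]

noncomputable def cb : ℕ → ℕ → Polynomial F
  | 0, 0 => 1
  | 0, _ + 1 => 0
  | k + 1, 0 => X * cb k 0
  | k + 1, i + 1 => X ^ (Fintype.card F ^ (i + 1)) * cb k (i + 1) + cb k i

lemma cb_eq_zero : ∀ k i, k < i → cb F k i = 0
  | 0, _ + 1, _ => rfl
  | k + 1, i + 1, h => by
      rw [cb, cb_eq_zero k (i+1) (by omega), cb_eq_zero k i (by omega)]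
      ring

lemma cb_diag : ∀ k, cb F k k = 1
  | 0 => rfl
  | k + 1 => by rw [cb, cb_eq_zero F k (k+1) (by omega), cb_diag k]; ring

lemma cb_zero : ∀ k, cb F k 0 = X ^ k
  | 0 => rfl
  | k + 1 => by rw [cb, cb_zero k]; ring

lemma card_prime_pow : ∃ p e : ℕ, Nat.Prime p ∧ 0 < e ∧ Fintype.card F = p ^ e ∧ p = ringChar F := by
  have hp : Fact (ringChar F).Prime := ⟨CharP.char_is_prime F _⟩
  obtain ⟨e, _, hcard⟩ := FiniteField.card F (ringChar F)
  exact ⟨ringChar F, e, hp.out, e.2, hcard, rfl⟩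

lemma fresh_add {R : Type*} [CommRing R] [CharP R (ringChar F)] (m : ℕ) (x y : R) :
    (x + y) ^ (Fintype.card F ^ m) = x ^ (Fintype.card F ^ m) + y ^ (Fintype.card F ^ m) := by
  obtain ⟨p, e, hp, he, hcard, hchar⟩ := card_prime_pow F
  haveI : Fact p.Prime := ⟨hp⟩
  haveI : CharP R p := hchar ▸ inferInstance
  rw [hcard, ← pow_mul]
  apply add_pow_char_pow

lemma fresh_sum {R : Type*} [CommRing R] [CharP R (ringChar F)] (m : ℕ) {ι : Type*}
    (s : Finset ι) (f : ι → R) :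
    (∑ i ∈ s, f i) ^ (Fintype.card F ^ m) = ∑ i ∈ s, f i ^ (Fintype.card F ^ m) := by
  obtain ⟨p, e, hp, he, hcard, hchar⟩ := card_prime_pow F
  haveI : Fact p.Prime := ⟨hp⟩
  haveI : CharP R p := hchar ▸ inferInstance
  rw [hcard, ← pow_mul]
  apply sum_pow_char_pow

lemma carlitzTpow_succ' (k : ℕ) :
    carlitzTpow F (k + 1) = C X * carlitzTpow F k + carlitzTpow F k ^ Fintype.card F := by
  induction k with
  | zero => simp [carlitzTpow]
  | succ k ih =>
    have h : carlitzTpow F (k+1+1)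
        = (carlitzTpow F (k+1)).comp (C X * X + X ^ (Fintype.card F)) := rfl
    rw [h]
    conv_lhs => rw [ih]
    rw [add_comp, mul_comp, C_comp, pow_comp]
    rfl

lemma carlitzTpow_eq (k : ℕ) :
    carlitzTpow F k = ∑ i ∈ range (k + 1), C (cb F k i) * X ^ (Fintype.card F ^ i) := by
  induction k with
  | zero => simp [carlitzTpow, cb]
  | succ k ih =>
    set q := Fintype.card F with hq
    have hA : ∀ i, (C (cb F k i) * X ^ (q ^ i)).comp (C X * X + X ^ q)
        = C (X ^ q ^ i) * C (cb F k i) * X ^ q ^ i + C (cb F k i) * X ^ q ^ (i+1) := by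
      intro i
      rw [mul_comp, C_comp, pow_comp, X_comp, fresh_add F i, mul_pow, ← C_pow, ← pow_mul,
        ← pow_succ']
      ring
    have step : carlitzTpow F (k+1)
        = ∑ i ∈ range (k+1), (C ((X : Polynomial F) ^ q ^ i) * C (cb F k i) * X ^ q ^ i)
          + ∑ i ∈ range (k+1), (C (cb F k i) * X ^ q ^ (i+1)) := by
      have h0 : carlitzTpow F (k+1) = (carlitzTpow F k).comp (C X * X + X ^ q) := rfl
      rw [h0, ih, Polynomial.sum_comp, ← sum_add_distrib]
      exact Finset.sum_congr rfl fun i _ => hA i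
    have hAext : ∑ i ∈ range (k+1), (C ((X : Polynomial F) ^ q ^ i) * C (cb F k i) * X ^ q ^ i)
        = ∑ i ∈ range (k+2), (C ((X : Polynomial F) ^ q ^ i) * C (cb F k i) * X ^ q ^ i) := by
      rw [Finset.sum_range_succ (fun i => C ((X : Polynomial F) ^ q ^ i) * C (cb F k i) * X ^ q ^ i)
        (k+1), cb_eq_zero F k (k+1) (by omega)]
      simp
    have hsplit : ∑ i ∈ range (k+2), (C ((X : Polynomial F) ^ q ^ i) * C (cb F k i) * X ^ q ^ i)
        = ∑ i ∈ range (k+1), (C ((X : Polynomial F) ^ q ^ (i+1)) * C (cb F k (i+1)) * X ^ q ^ (i+1))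
          + C ((X : Polynomial F) ^ q ^ 0) * C (cb F k 0) * X ^ q ^ 0 :=
      Finset.sum_range_succ' _ (k+1)
    have hterm : ∀ i, C (cb F (k+1) (i+1)) * X ^ q ^ (i+1)
        = C ((X : Polynomial F) ^ q ^ (i+1)) * C (cb F k (i+1)) * X ^ q ^ (i+1)
          + C (cb F k i) * X ^ q ^ (i+1) := by
      intro i
      rw [show cb F (k+1) (i+1) = X ^ (q ^ (i+1)) * cb F k (i+1) + cb F k i from rfl, C_add, C_mul]
      ring
    have hrhs : ∑ i ∈ range (k+1+1), C (cb F (k+1) i) * X ^ q ^ i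
        = ∑ i ∈ range (k+1), (C ((X : Polynomial F) ^ q ^ (i+1)) * C (cb F k (i+1)) * X ^ q ^ (i+1)
            + C (cb F k i) * X ^ q ^ (i+1))
          + C ((X : Polynomial F) ^ q ^ 0) * C (cb F k 0) * X ^ q ^ 0 := by
      rw [Finset.sum_range_succ' (fun i => C (cb F (k+1) i) * X ^ q ^ i) (k+1)]
      congr 1
      · exact Finset.sum_congr rfl fun i _ => hterm i
      · rw [show cb F (k+1) 0 = X * cb F k 0 from rfl, C_mul]; simp
    rw [step, hAext, hsplit, hrhs, sum_add_distrib]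
    ring
end CarlitzAux
section Carlitz2
variable (F : Type) [Field F] [Fintype F]

lemma coeff_qsum (N j : ℕ) (a : ℕ → Polynomial F) (hj : j < N) :
    (∑ i ∈ range N, C (a i) * X ^ (Fintype.card F ^ i)).coeff (Fintype.card F ^ j) = a j := by
  rw [finset_sum_coeff, Finset.sum_eq_single j]
  · rw [coeff_C_mul, coeff_X_pow, if_pos rfl, mul_one]
  · intro i _ hij
    rw [coeff_C_mul, coeff_X_pow, if_neg, mul_zero]
    exact fun h => hij (Nat.pow_right_injective Fintype.one_lt_card h.symm)
  · intro h; exact absurd (mem_range.2 hj) h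

lemma coeff_carlitzTpow (k j : ℕ) :
    (carlitzTpow F k).coeff (Fintype.card F ^ j) = cb F k j := by
  rw [carlitzTpow_eq]
  rcases lt_or_ge j (k+1) with h | h
  · exact coeff_qsum F (k+1) j _ h
  · rw [cb_eq_zero F k j (by omega), finset_sum_coeff]
    apply Finset.sum_eq_zero
    intro i hi
    rw [coeff_C_mul, coeff_X_pow, if_neg, mul_zero]
    intro hh
    have := Nat.pow_right_injective Fintype.one_lt_card hh
    have := mem_range.1 hi
    omega

lemma cb_succ' (k i : ℕ) :
    cb F (k+1) (i+1) = X * cb F k (i+1) + cb F k i ^ Fintype.card F := by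
  set q := Fintype.card F with hqdef
  have hq2 : 2 ≤ q := Fintype.one_lt_card
  rcases lt_or_ge k i with hki | hik
  · rw [cb_eq_zero F (k+1) (i+1) (by omega), cb_eq_zero F k (i+1) (by omega),
      cb_eq_zero F k i (by omega), mul_zero, zero_pow (by omega), add_zero]
  have h := congrArg (fun f : Polynomial (Polynomial F) => f.coeff (q ^ (i+1)))
    (carlitzTpow_succ' F k)
  simp only [coeff_add, coeff_C_mul] at h
  rw [coeff_carlitzTpow, coeff_carlitzTpow] at h
  rw [h]
  congr 1
  have hs := fresh_sum F (R := Polynomial (Polynomial F)) 1 (range (k+1))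
    (fun i => C (cb F k i) * X ^ (q ^ i))
  rw [pow_one] at hs
  rw [carlitzTpow_eq, hs]
  have hterm : ∀ i', (C (cb F k i') * X ^ q ^ i') ^ q = C (cb F k i' ^ q) * X ^ q ^ (i'+1) := by
    intro i'; rw [mul_pow, ← C_pow, ← pow_mul, ← pow_succ]
  rw [Finset.sum_congr rfl fun i' _ => hterm i']
  have hre : ∑ i' ∈ range (k+1), C (cb F k i' ^ q) * X ^ q ^ (i'+1)
      = ∑ i' ∈ range (k+2),
          C ((fun j => if j = 0 then 0 else cb F k (j-1) ^ q) i') * X ^ q ^ i' := by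
    rw [Finset.sum_range_succ'
      (fun i' => C ((fun j => if j = 0 then 0 else cb F k (j-1) ^ q) i') * X ^ q ^ i') (k+1)]
    simp
  rw [hre, coeff_qsum F (k+2) (i+1) _ (by omega)]
  simp

lemma cb_cross (k i : ℕ) :
    ((X : Polynomial F) ^ (Fintype.card F ^ (i+1)) - X) * cb F k (i+1)
      = cb F k i ^ Fintype.card F - cb F k i := by
  have h1 := cb_succ' F k i
  have h2 : cb F (k+1) (i+1) = X ^ (Fintype.card F ^ (i+1)) * cb F k (i+1) + cb F k i := rfl
  linear_combination h1 - h2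

end Carlitz2
section Carlitz3
variable (F : Type) [Field F] [Fintype F]

lemma cb_monic_natDegree : ∀ k i, i ≤ k →
    (cb F k i).Monic ∧ (cb F k i).natDegree = (k - i) * Fintype.card F ^ i := by
  intro k
  induction k with
  | zero =>
    intro i hi
    interval_cases i
    exact ⟨by rw [show cb F 0 0 = 1 from rfl]; exact monic_one, by simp [show cb F 0 0 = 1 from rfl]⟩
  | succ k ih =>
    intro i hi
    set q := Fintype.card F with hq
    have hq2 : 1 < q := Fintype.one_lt_card
    match i, hi with
    | 0, _ =>
      rw [cb_zero]
      exact ⟨monic_X_pow _, by simp⟩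
    | i+1, hi =>
      rcases eq_or_lt_of_le hi with heq | hlt
      · rw [← heq, cb_diag]
        exact ⟨monic_one, by simp⟩
      · have hik : i + 1 ≤ k := by omega
        obtain ⟨hm1, hd1⟩ := ih (i+1) hik
        obtain ⟨hm0, hd0⟩ := ih i (by omega)
        have hdefn : cb F (k+1) (i+1) = X ^ (q ^ (i+1)) * cb F k (i+1) + cb F k i := rfl
        have hmf : (X ^ (q ^ (i+1)) * cb F k (i+1)).Monic := (monic_X_pow _).mul hm1
        have hdf : (X ^ (q ^ (i+1)) * cb F k (i+1)).natDegree = (k + 1 - (i+1)) * q ^ (i+1) := by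
          rw [natDegree_mul (pow_ne_zero _ X_ne_zero) hm1.ne_zero, natDegree_X_pow, hd1]
          have h1 : k + 1 - (i + 1) = (k - (i+1)) + 1 := by omega
          rw [h1, add_mul, one_mul, add_comm]
        have hlt2 : (k - i) * q ^ i < (k + 1 - (i+1)) * q ^ (i+1) := by
          have e1 : k + 1 - (i + 1) = k - i := by omega
          rw [e1]
          have h2 : q ^ i < q ^ (i+1) := by
            apply Nat.pow_lt_pow_right hq2; omega
          have h3 : 0 < k - i := by omega
          exact Nat.mul_lt_mul_of_le_of_lt (le_refl _) h2 h3
        have hdeglt : (cb F k i).degree < (X ^ (q ^ (i+1)) * cb F k (i+1)).degree := by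
          rw [Polynomial.degree_eq_natDegree hmf.ne_zero, hdf,
            Polynomial.degree_eq_natDegree hm0.ne_zero, hd0]
          exact_mod_cast hlt2
        constructor
        · rw [hdefn]; exact hmf.add_of_left hdeglt
        · rw [hdefn, natDegree_eq_of_degree_eq (degree_add_eq_left_of_degree_lt hdeglt), hdf]

noncomputable def am (m : Polynomial F) (i : ℕ) : Polynomial F :=
  ∑ k ∈ range (m.natDegree + 1), C (m.coeff k) * cb F k i

lemma carlitz_eq (m : Polynomial F) :
    carlitz F m = ∑ i ∈ range (m.natDegree + 1), C (am F m i) * X ^ (Fintype.card F ^ i) := by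
  set q := Fintype.card F with hq
  set N := m.natDegree + 1 with hN
  rw [show carlitz F m = m.sum fun k c => C (C c) * carlitzTpow F k from rfl,
    Polynomial.sum_over_range (p := m) (f := fun k c => C (C c) * carlitzTpow F k)
      (fun n => by simp)]
  have h2 : ∀ k ∈ range N, C (C (m.coeff k)) * carlitzTpow F k
      = ∑ i ∈ range N, C (C (m.coeff k)) * (C (cb F k i) * X ^ (q ^ i)) := by
    intro k hk
    rw [carlitzTpow_eq, Finset.mul_sum]
    apply Finset.sum_subset (Finset.range_subset_range.2 (by have := mem_range.1 hk; omega))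
    intro i hiN hnot
    rw [cb_eq_zero F k i (by have := mem_range.1 hiN; simp at hnot; omega)]
    simp
  rw [Finset.sum_congr rfl h2, Finset.sum_comm]
  apply Finset.sum_congr rfl
  intro i _
  rw [show am F m i = ∑ k ∈ range N, C (m.coeff k) * cb F k i from rfl, map_sum, Finset.sum_mul]
  apply Finset.sum_congr rfl
  intro k _
  rw [C_mul]; ring

lemma am_zero (m : Polynomial F) : am F m 0 = m := by
  unfold am
  rw [Finset.sum_congr rfl fun k _ => by rw [cb_zero]]
  conv_rhs => rw [← Polynomial.sum_C_mul_X_pow_eq m]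
  rw [Polynomial.sum_over_range (p := m) (f := fun n a => C a * X ^ n) (fun n => by simp)]

lemma am_top (m : Polynomial F) (hm : m.Monic) : am F m m.natDegree = 1 := by
  unfold am
  rw [Finset.sum_range_succ, Finset.sum_eq_zero, hm.coeff_natDegree, cb_diag]
  · simp
  · intro k hk; rw [cb_eq_zero F k m.natDegree (mem_range.1 hk)]; ring

lemma am_cross (m : Polynomial F) (i : ℕ) :
    ((X : Polynomial F) ^ (Fintype.card F ^ (i+1)) - X) * am F m (i+1)
      = am F m i ^ Fintype.card F - am F m i := by
  set q := Fintype.card F with hq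
  unfold am
  rw [Finset.mul_sum]
  have h1 : ∀ k, (X ^ q ^ (i+1) - X) * (C (m.coeff k) * cb F k (i+1))
      = (C (m.coeff k) * cb F k i) ^ q - C (m.coeff k) * cb F k i := by
    intro k
    have hcc := cb_cross F k i
    have hC : (C (m.coeff k)) ^ q = C (m.coeff k) := by rw [← C_pow, FiniteField.pow_card]
    calc (X ^ q ^ (i+1) - X) * (C (m.coeff k) * cb F k (i+1))
        = C (m.coeff k) * ((X ^ q ^ (i+1) - X) * cb F k (i+1)) := by ring
      _ = C (m.coeff k) * (cb F k i ^ q - cb F k i) := by rw [hcc]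
      _ = (C (m.coeff k)) ^ q * cb F k i ^ q - C (m.coeff k) * cb F k i := by rw [hC]; ring
      _ = (C (m.coeff k) * cb F k i) ^ q - C (m.coeff k) * cb F k i := by rw [mul_pow]
  rw [Finset.sum_congr rfl fun k _ => h1 k, Finset.sum_sub_distrib]
  have hs := fresh_sum F (R := Polynomial F) 1 (range (m.natDegree+1))
    (fun k => C (m.coeff k) * cb F k i)
  rw [pow_one] at hs
  rw [hs]

lemma am_monic_natDegree (m : Polynomial F) (hm : m.Monic) (i : ℕ) (hi : i < m.natDegree) :
    (am F m i).Monic ∧ (am F m i).natDegree = (m.natDegree - i) * Fintype.card F ^ i := by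
  set q := Fintype.card F with hq
  set n := m.natDegree with hn
  have key : am F m i = cb F n i + ∑ k ∈ range n, C (m.coeff k) * cb F k i := by
    unfold am
    rw [Finset.sum_range_succ, hm.coeff_natDegree, map_one, one_mul, add_comm]
  obtain ⟨hmn, hdn⟩ := cb_monic_natDegree F n i (le_of_lt hi)
  have hdeg : (∑ k ∈ range n, C (m.coeff k) * cb F k i).degree < (cb F n i).degree := by
    rw [Polynomial.degree_eq_natDegree hmn.ne_zero, hdn]
    apply lt_of_le_of_lt (Polynomial.degree_sum_le _ _)
    rw [Finset.sup_lt_iff (by exact WithBot.bot_lt_coe _)]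
    intro k hk
    have hlc : (C (m.coeff k) * cb F k i).degree ≤ (cb F k i).degree := by
      apply le_trans (degree_mul_le _ _)
      calc (C (m.coeff k)).degree + (cb F k i).degree ≤ 0 + (cb F k i).degree := by
            exact add_le_add degree_C_le le_rfl
        _ = (cb F k i).degree := by rw [zero_add]
    apply lt_of_le_of_lt hlc
    rcases lt_or_ge k i with hki | hik
    · rw [cb_eq_zero F k i hki]
      rw [degree_zero]
      exact WithBot.bot_lt_coe _
    · obtain ⟨hmk, hdk⟩ := cb_monic_natDegree F k i hik
      rw [Polynomial.degree_eq_natDegree hmk.ne_zero, hdk]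
      have : (k - i) * q ^ i < (n - i) * q ^ i := by
        have h3 : k - i < n - i := by have := mem_range.1 hk; omega
        have h4 : 0 < q ^ i := by positivity
        exact Nat.mul_lt_mul_of_lt_of_le h3 (le_refl _) h4
      exact_mod_cast this
  constructor
  · rw [key]; exact hmn.add_of_left hdeg
  · rw [key, natDegree_eq_of_degree_eq (degree_add_eq_left_of_degree_lt hdeg), hdn]

end Carlitz3
section Carlitz4
variable (F : Type) [Field F] [Fintype F]

lemma succ_lt_three_pow (j : ℕ) (hj : 1 ≤ j) : j + 1 < 3 ^ j := by
  induction j with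
  | zero => omega
  | succ j ih =>
    rcases Nat.eq_zero_or_pos j with h | h
    · subst h; norm_num
    · have h1 := ih h
      have h2 : (3:ℕ) ^ (j+1) = 3 * 3 ^ j := by rw [pow_succ]; ring
      omega

lemma deg_bound (q n i : ℕ) (hq : 3 ≤ q) (hn : 2 ≤ n) (hi : i < n - 1) :
    (n - i) * q ^ i < q ^ (n - 1) := by
  have hj : 1 ≤ n - 1 - i := by omega
  set j := n - 1 - i with hjdef
  have h1 : n - i = j + 1 := by omega
  have h2 : q ^ (n-1) = q ^ i * q ^ j := by rw [← pow_add]; congr 1; omega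
  rw [h1, h2]
  have h3 : j + 1 < 3 ^ j := succ_lt_three_pow j hj
  have h4 : (3:ℕ) ^ j ≤ q ^ j := Nat.pow_le_pow_left hq j
  have h5 : j + 1 < q ^ j := lt_of_lt_of_le h3 h4
  calc (j+1) * q ^ i < q ^ j * q ^ i :=
        Nat.mul_lt_mul_of_lt_of_le h5 (le_refl _) (by positivity)
    _ = q ^ i * q ^ j := by ring

lemma not_dvd_X_pow_card_sub_X (P : Polynomial F) (hPirr : Irreducible P) (hPm : P.Monic)
    (j : ℕ) (hj1 : 1 ≤ j) (hjn : j < P.natDegree) :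
    ¬ P ∣ ((X : Polynomial F) ^ (Fintype.card F ^ j) - X) := by
  intro hdvd
  set q := Fintype.card F with hqdef
  have hq2 : 1 < q := Fintype.one_lt_card
  haveI : Fact (Irreducible P) := ⟨hPirr⟩
  set t : AdjoinRoot P := AdjoinRoot.root P with ht0
  have ht : t ^ q ^ j = t := by
    have h0 : AdjoinRoot.mk P ((X : Polynomial F) ^ (q ^ j) - X) = 0 :=
      (AdjoinRoot.mk_eq_zero).2 hdvd
    rw [map_sub, map_pow, AdjoinRoot.mk_X] at h0
    exact sub_eq_zero.1 h0
  obtain ⟨p, e, hp, he, hcard, hchar⟩ := card_prime_pow F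
  haveI : Fact p.Prime := ⟨hp⟩
  haveI hFp : CharP F p := hchar ▸ ringChar.charP F
  haveI : CharP (AdjoinRoot P) p :=
    charP_of_injective_algebraMap (algebraMap F (AdjoinRoot P)).injective p
  set ψ := iterateFrobenius (AdjoinRoot P) p (e * j) with hψ
  have hψx : ∀ x : AdjoinRoot P, ψ x = x ^ q ^ j := by
    intro x; rw [hψ, iterateFrobenius_def, hqdef, hcard, ← pow_mul]
  have hψt : ψ t = t := by rw [hψx]; exact ht
  have hψa : ∀ a : F, ψ (algebraMap F (AdjoinRoot P) a) = algebraMap F (AdjoinRoot P) a := by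
    intro a
    rw [hψx, ← map_pow, FiniteField.pow_card_pow]
  have hall : ∀ x : AdjoinRoot P, x ^ q ^ j = x := by
    intro x
    rw [← hψx]
    induction x using AdjoinRoot.induction_on with
    | ih f =>
      rw [← AdjoinRoot.aeval_eq, aeval_def, hom_eval₂]
      have hcomp : ψ.comp (algebraMap F (AdjoinRoot P)) = algebraMap F (AdjoinRoot P) :=
        RingHom.ext hψa
      rw [hcomp, hψt, ← aeval_def, AdjoinRoot.aeval_eq]
  haveI : Fintype (AdjoinRoot P) :=
    Module.fintypeOfFintype (AdjoinRoot.powerBasis (f := P) hPm.ne_zero).basis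
  have hcardK : Fintype.card (AdjoinRoot P) = q ^ P.natDegree := by
    rw [Module.card_fintype (AdjoinRoot.powerBasis (f := P) hPm.ne_zero).basis, Fintype.card_fin,
      AdjoinRoot.powerBasis_dim hPm.ne_zero]
  obtain ⟨g, hg⟩ := IsCyclic.exists_generator (α := (AdjoinRoot P)ˣ)
  have horder : orderOf g = q ^ P.natDegree - 1 := by
    rw [orderOf_eq_card_of_forall_mem_zpowers hg, Nat.card_eq_fintype_card, Fintype.card_units, hcardK]
  have hgK : (g : AdjoinRoot P) ^ q ^ j = (g : AdjoinRoot P) := hall g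
  have hgu : g ^ q ^ j = g := Units.ext (by simpa using hgK)
  have hq1 : 1 ≤ q ^ j := Nat.one_le_pow _ _ (by omega)
  have hgpow : g ^ (q ^ j - 1) = 1 := by
    have h2 : g ^ (q ^ j - 1) * g ^ 1 = 1 * g ^ 1 := by
      rw [← pow_add, show q ^ j - 1 + 1 = q ^ j from by omega, hgu, pow_one, one_mul]
    exact mul_right_cancel h2
  have hdvd2 : q ^ P.natDegree - 1 ∣ q ^ j - 1 := horder ▸ orderOf_dvd_of_pow_eq_one hgpow
  have hqj : 1 < q ^ j := Nat.one_lt_pow (by omega) hq2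
  have hle : q ^ P.natDegree - 1 ≤ q ^ j - 1 := Nat.le_of_dvd (by omega) hdvd2
  have h1n : 1 ≤ q ^ P.natDegree := Nat.one_le_pow _ _ (by omega)
  have hle2 : q ^ P.natDegree ≤ q ^ j := by omega
  have := (Nat.pow_le_pow_iff_right hq2).1 hle2
  omega

end Carlitz4
section Carlitz5
variable (F : Type) [Field F] [Fintype F]

lemma carlitzEval_one (m : Polynomial F) :
    carlitzEval F m 1 = ∑ i ∈ range (m.natDegree + 1), am F m i := by
  rw [show carlitzEval F m 1 = (carlitz F m).eval 1 from rfl, carlitz_eq, eval_finset_sum]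
  apply Finset.sum_congr rfl
  intro i _
  rw [eval_mul, eval_C, eval_pow, eval_X, one_pow, mul_one]

lemma carlitz_add (m m' : Polynomial F) : carlitz F (m + m') = carlitz F m + carlitz F m' := by
  show (m + m').sum _ = m.sum _ + m'.sum _
  apply Polynomial.sum_add_index
  · intro i; simp
  · intro i a b; rw [map_add, map_add, add_mul]

lemma carlitz_one : carlitz F 1 = X := by
  show (1 : Polynomial F).sum _ = X
  rw [show (1 : Polynomial F) = C 1 from (map_one C).symm, Polynomial.sum_C_index (by simp)]
  simp [carlitzTpow]

end Carlitz5

/-- For `q > 2`: if `℘` and `P = ℘ + 1` are both monic irreducible of degree `n ≥ 2`,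
then `P` divides `C_℘(1)` and `C_℘(1)` is not irreducible. -/
theorem mersenne_composite_of_twin_primes (F : Type) [Field F] [Fintype F]
    (hq : 2 < Fintype.card F)
    (℘ : Polynomial F) (n : ℕ) (h℘m : ℘.Monic) (h℘irr : Irreducible ℘)
    (hPm : (℘ + 1).Monic) (hPirr : Irreducible (℘ + 1))
    (hn : ℘.natDegree = n) (hn2 : 2 ≤ n) :
    (℘ + 1) ∣ carlitzEval F ℘ 1 ∧ ¬Irreducible (carlitzEval F ℘ 1) := by
  classical
  set q := Fintype.card F with hqdef
  set P := ℘ + 1 with hPdef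
  have hq2 : 1 < q := Fintype.one_lt_card
  have hnP : P.natDegree = n := by
    rw [hPdef, show (1 : Polynomial F) = C 1 from (map_one C).symm, natDegree_add_C, hn]
  haveI : Fact (Irreducible P) := ⟨hPirr⟩
  set φ := AdjoinRoot.mk P with hφ
  -- Part 1 : divisibility
  have key : ∀ i, i < n → φ (am F P i) = 0 := by
    intro i
    induction i with
    | zero => intro _; rw [am_zero]; exact AdjoinRoot.mk_self
    | succ i ih =>
      intro hin
      have h0 := ih (by omega)
      have hcross : φ ((X : Polynomial F) ^ (q ^ (i+1)) - X) * φ (am F P (i+1)) = 0 := by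
        rw [← map_mul, am_cross F P i, map_sub, map_pow, h0,
          zero_pow (show q ≠ 0 by omega), sub_zero]
      rcases mul_eq_zero.1 hcross with h | h
      · exact absurd ((AdjoinRoot.mk_eq_zero).1 h)
          (not_dvd_X_pow_card_sub_X F P hPirr hPm (i+1) (by omega) (by rw [hnP]; omega))
      · exact h
  have hmkP : φ (carlitzEval F P 1) = 1 := by
    rw [carlitzEval_one, hnP, map_sum, Finset.sum_range_succ,
      Finset.sum_eq_zero (fun i hi => key i (mem_range.1 hi)),
      show am F P n = 1 from by rw [← hnP]; exact am_top F P hPm, map_one, zero_add]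
  have heval : carlitzEval F P 1 = carlitzEval F ℘ 1 + 1 := by
    have h1 : carlitz F P = carlitz F ℘ + carlitz F 1 := carlitz_add F ℘ 1
    show (carlitz F P).eval 1 = (carlitz F ℘).eval 1 + 1
    rw [h1, eval_add, carlitz_one, eval_X]
  have hmk0 : φ (carlitzEval F ℘ 1) = 0 := by
    have h2 := congrArg φ heval
    rw [hmkP, map_add, map_one] at h2
    linear_combination -h2
  have hdvd : P ∣ carlitzEval F ℘ 1 := (AdjoinRoot.mk_eq_zero).1 hmk0
  -- Part 2 : degree computation
  have hsum : carlitzEval F ℘ 1 = am F ℘ (n-1) + ∑ i ∈ (range (n+1)).erase (n-1), am F ℘ i := by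
    rw [carlitzEval_one, hn]
    exact (Finset.add_sum_erase _ _ (mem_range.2 (by omega))).symm
  obtain ⟨hmdom, hddom⟩ := am_monic_natDegree F ℘ h℘m (n-1) (by omega)
  have hdd : (am F ℘ (n-1)).natDegree = q ^ (n-1) := by
    rw [hddom, hn, show n - (n-1) = 1 from by omega, one_mul]
  have hq3 : 3 ≤ q := hq
  have hrest : (∑ i ∈ (range (n+1)).erase (n-1), am F ℘ i).degree < (am F ℘ (n-1)).degree := by
    rw [Polynomial.degree_eq_natDegree hmdom.ne_zero, hdd]
    apply lt_of_le_of_lt (degree_sum_le _ _)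
    rw [Finset.sup_lt_iff (WithBot.bot_lt_coe _)]
    intro i hi
    obtain ⟨hine, hirange⟩ := Finset.mem_erase.1 hi
    have hile : i < n + 1 := mem_range.1 hirange
    rcases eq_or_lt_of_le (show i ≤ n by omega) with he | hlt2
    · rw [he, show am F ℘ n = 1 from by rw [← hn]; exact am_top F ℘ h℘m, degree_one]
      exact_mod_cast (show ((0:ℕ) : WithBot ℕ) < ((q^(n-1) : ℕ) : WithBot ℕ) from
        by exact_mod_cast (show 0 < q^(n-1) by positivity))
    · obtain ⟨hmi, hdi⟩ := am_monic_natDegree F ℘ h℘m i (by omega)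
      rw [Polynomial.degree_eq_natDegree hmi.ne_zero, hdi, hn]
      exact_mod_cast deg_bound q n i hq3 hn2 (by omega)
  have hCmono : (carlitzEval F ℘ 1).Monic := by
    rw [hsum]; exact hmdom.add_of_left hrest
  have hCdeg : (carlitzEval F ℘ 1).natDegree = q ^ (n-1) := by
    rw [hsum, natDegree_eq_of_degree_eq (degree_add_eq_left_of_degree_lt hrest), hdd]
  refine ⟨hdvd, ?_⟩
  intro hirr
  obtain ⟨u, hu⟩ := hPirr.associated_of_dvd hirr hdvd
  have hdeg : (carlitzEval F ℘ 1).natDegree = n := by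
    rw [← hu, natDegree_mul hPm.ne_zero (Units.ne_zero u),
      natDegree_eq_zero_of_isUnit u.isUnit, add_zero, hnP]
  have h3 : n < 3 ^ (n-1) := by
    have := succ_lt_three_pow (n-1) (by omega)
    omega
  have h4 : (3:ℕ) ^ (n-1) ≤ q ^ (n-1) := Nat.pow_le_pow_left hq3 _
  rw [hCdeg] at hdeg
  omega
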